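/- arXiv:1001.4268 — 2 statements merged into one kernel-verified Lean document; each statement's English description precedes it below -/
import Mathlib

section
/- For every n ≥ 2, the descending staircase E_n is brodable. -/
/-- Two vertices of `ℤ²` are adjacent if their Euclidean distance is `1`. -/
def Adj (u v : ℤ × ℤ) : Prop := (u.1 - v.1) ^ 2 + (u.2 - v.2) ^ 2 = 1

/-- The inferior diagonal of the cell `(a, b)`: the unordered pair `{(a,b), (a+1,b+1)}`. -/
def infDiag (c : ℤ × ℤ) : Sym2 (ℤ × ℤ) := s(c, (c.1 + 1, c.2 + 1))

/-- The superior diagonal of the cell `(a, b)`: the unordered pair `{(a,b+1), (a+1,b)}`. -/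
def supDiag (c : ℤ × ℤ) : Sym2 (ℤ × ℤ) := s((c.1, c.2 + 1), (c.1 + 1, c.2))

/-- The unordered pair underlying an ordered pair of vertices. -/
def diagOf (e : (ℤ × ℤ) × (ℤ × ℤ)) : Sym2 (ℤ × ℤ) := s(e.1, e.2)

/-- `d 0, d 1, …, d (2n - 1)` (with `n = C.card`) is an embroidery of the
configuration `C`. -/
def IsEmbroidery (C : Finset (ℤ × ℤ)) (d : ℕ → (ℤ × ℤ) × (ℤ × ℤ)) : Prop :=
  (∀ i < 2 * C.card, ∃ c ∈ C, diagOf (d i) = infDiag c ∨ diagOf (d i) = supDiag c) ∧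
  (∀ c ∈ C, ∃! i, i < 2 * C.card ∧ diagOf (d i) = infDiag c) ∧
  (∀ c ∈ C, ∃! i, i < 2 * C.card ∧ diagOf (d i) = supDiag c) ∧
  (∀ c ∈ C, ∀ i j, i < 2 * C.card → j < 2 * C.card →
    diagOf (d i) = infDiag c → diagOf (d j) = supDiag c → i < j) ∧
  (∀ i, i + 1 < 2 * C.card → Adj (d i).2 (d (i + 1)).1)

/-- A closed embroidery: moreover the end of the last diagonal is adjacent to the
start of the first one. -/
def IsClosedEmbroidery (C : Finset (ℤ × ℤ)) (d : ℕ → (ℤ × ℤ) × (ℤ × ℤ)) : Prop :=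
  IsEmbroidery C d ∧ Adj (d (2 * C.card - 1)).2 (d 0).1

/-- A configuration is brodable if it admits an embroidery. -/
def Brodable (C : Finset (ℤ × ℤ)) : Prop := ∃ d, IsEmbroidery C d

/-- A configuration is strongly brodable if it admits a closed embroidery. -/
def StronglyBrodable (C : Finset (ℤ × ℤ)) : Prop := ∃ d, IsClosedEmbroidery C d

/-- The descending staircase `E_n = {(i, -i) : 0 ≤ i < n}`. -/
def staircase (n : ℕ) : Finset (ℤ × ℤ) :=
  (Finset.range n).image (fun i : ℕ => ((i : ℤ), -(i : ℤ)))

/-- The explicit embroidery of the staircase. -/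
def dSeq (i : ℕ) : (ℤ × ℤ) × (ℤ × ℤ) :=
  let k : ℤ := (i / 2 : ℕ)
  if i % 2 = 0 then ((k + 1, 1 - k), (k, -k)) else ((k, 1 - k), (k + 1, -k))

lemma dSeq_diag_even (i : ℕ) (h : i % 2 = 0) :
    diagOf (dSeq i) = infDiag ((i / 2 : ℕ), -(i / 2 : ℕ)) := by
  simp only [dSeq, diagOf, infDiag, h, if_pos]
  rw [Sym2.eq_swap]
  norm_num
  ring

lemma dSeq_diag_odd (i : ℕ) (h : i % 2 = 1) :
    diagOf (dSeq i) = supDiag ((i / 2 : ℕ), -(i / 2 : ℕ)) := by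
  simp only [dSeq, diagOf, supDiag, h]
  norm_num
  ring

lemma inf_eq_inf {a b : ℤ} : infDiag (a, -a) = infDiag (b, -b) ↔ a = b := by
  simp only [infDiag, Sym2.eq_iff, Prod.mk.injEq]
  omega

lemma sup_eq_sup {a b : ℤ} : supDiag (a, -a) = supDiag (b, -b) ↔ a = b := by
  simp only [supDiag, Sym2.eq_iff, Prod.mk.injEq]
  omega

lemma sup_ne_inf {a b : ℤ} : supDiag (a, -a) ≠ infDiag (b, -b) := by
  intro h
  simp only [supDiag, infDiag, Sym2.eq_iff, Prod.mk.injEq] at h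
  omega

lemma staircase_card (n : ℕ) : (staircase n).card = n := by
  rw [staircase, Finset.card_image_of_injective, Finset.card_range]
  intro a b h
  simpa using congrArg Prod.fst h

lemma mem_staircase {n : ℕ} {c : ℤ × ℤ} :
    c ∈ staircase n ↔ ∃ j < n, c = ((j : ℤ), -(j : ℤ)) := by
  simp only [staircase, Finset.mem_image, Finset.mem_range]
  constructor
  · rintro ⟨j, hj, rfl⟩; exact ⟨j, hj, rfl⟩
  · rintro ⟨j, hj, rfl⟩; exact ⟨j, hj, rfl⟩

/-- For every `n ≥ 2`, the descending staircase `E_n` is brodable. -/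
theorem staircase_brodable (n : ℕ) (hn : 2 ≤ n) : Brodable (staircase n) := by
  refine ⟨dSeq, ?_, ?_, ?_, ?_, ?_⟩ <;> rw [staircase_card]
  · intro i hi
    refine ⟨((i / 2 : ℕ), -(i / 2 : ℕ)), mem_staircase.2 ⟨i / 2, by omega, rfl⟩, ?_⟩
    rcases Nat.mod_two_eq_zero_or_one i with h | h
    · exact Or.inl (dSeq_diag_even i h)
    · exact Or.inr (dSeq_diag_odd i h)
  · intro c hc
    obtain ⟨j, hj, rfl⟩ := mem_staircase.1 hc
    refine ⟨2 * j, ⟨by omega, ?_⟩, ?_⟩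
    · have := dSeq_diag_even (2 * j) (by omega)
      rwa [show (2 * j) / 2 = j by omega] at this
    · rintro i ⟨hi, hd⟩
      rcases Nat.mod_two_eq_zero_or_one i with h | h
      · rw [dSeq_diag_even i h] at hd
        have : ((i / 2 : ℕ) : ℤ) = (j : ℤ) := inf_eq_inf.1 hd
        omega
      · rw [dSeq_diag_odd i h] at hd
        exact absurd hd sup_ne_inf
  · intro c hc
    obtain ⟨j, hj, rfl⟩ := mem_staircase.1 hc
    refine ⟨2 * j + 1, ⟨by omega, ?_⟩, ?_⟩
    · have := dSeq_diag_odd (2 * j + 1) (by omega)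
      rwa [show (2 * j + 1) / 2 = j by omega] at this
    · rintro i ⟨hi, hd⟩
      rcases Nat.mod_two_eq_zero_or_one i with h | h
      · rw [dSeq_diag_even i h] at hd
        exact absurd hd.symm sup_ne_inf
      · rw [dSeq_diag_odd i h] at hd
        have : ((i / 2 : ℕ) : ℤ) = (j : ℤ) := sup_eq_sup.1 hd
        omega
  · intro c hc i j hi hj hinf hsup
    obtain ⟨m, hm, rfl⟩ := mem_staircase.1 hc
    have hie : i % 2 = 0 := by
      rcases Nat.mod_two_eq_zero_or_one i with h | h
      · exact h
      · rw [dSeq_diag_odd i h] at hinf; exact absurd hinf sup_ne_inf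
    have hjo : j % 2 = 1 := by
      rcases Nat.mod_two_eq_zero_or_one j with h | h
      · rw [dSeq_diag_even j h] at hsup; exact absurd hsup.symm sup_ne_inf
      · exact h
    rw [dSeq_diag_even i hie] at hinf
    rw [dSeq_diag_odd j hjo] at hsup
    have h1 : ((i / 2 : ℕ) : ℤ) = (m : ℤ) := inf_eq_inf.1 hinf
    have h2 : ((j / 2 : ℕ) : ℤ) = (m : ℤ) := sup_eq_sup.1 hsup
    omega
  · intro i hi
    rcases Nat.mod_two_eq_zero_or_one i with h | h
    · have h2 : (i + 1) % 2 = 1 := by omega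
      have hk : (i + 1) / 2 = i / 2 := by omega
      simp only [dSeq, h, h2, hk]
      norm_num [Adj]
      omega
    · have h2 : (i + 1) % 2 = 0 := by omega
      have hk : (i + 1) / 2 = i / 2 + 1 := by omega
      simp only [dSeq, h, h2, hk]
      norm_num [Adj]
end

section
/- For all integers g ≥ 2 and p ≥ 2, the staircase with landing E_{g,p,1} is brodable but not strongly brodable. -/
/-- The staircase with landing `E_{g,p,d}`:
`{(i, −i) : 0 ≤ i ≤ g−1} ∪ {(g−1+j, −g) : 1 ≤ j ≤ p} ∪ {(g+p+k−1, −g−k) : 1 ≤ k ≤ d}`. -/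
def stairLanding (g p d : ℕ) : Finset (ℤ × ℤ) :=
  (Finset.range g).image (fun i : ℕ => ((i : ℤ), -(i : ℤ))) ∪
  (Finset.range p).image (fun j : ℕ => ((g : ℤ) + j, -(g : ℤ))) ∪
  (Finset.range d).image (fun k : ℕ => ((g : ℤ) + p + k, -(g : ℤ) - 1 - k))


lemma adj_iff {u v : ℤ × ℤ} : Adj u v ↔
    (u.1 = v.1 ∧ (u.2 = v.2 + 1 ∨ v.2 = u.2 + 1)) ∨
    (u.2 = v.2 ∧ (u.1 = v.1 + 1 ∨ v.1 = u.1 + 1)) := by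
  unfold Adj
  constructor
  · intro h
    set a := u.1 - v.1 with ha
    set b := u.2 - v.2 with hb
    have h1 : a ≤ 1 := by nlinarith [sq_nonneg b, sq_nonneg a]
    have h2 : -1 ≤ a := by nlinarith [sq_nonneg b]
    have h3 : b ≤ 1 := by nlinarith [sq_nonneg a]
    have h4 : -1 ≤ b := by nlinarith [sq_nonneg a]
    have : (a = 0 ∧ (b = 1 ∨ b = -1)) ∨ (b = 0 ∧ (a = 1 ∨ a = -1)) := by
      interval_cases a <;> interval_cases b <;> omega
    omega
  · intro h
    rcases h with ⟨h1, h2 | h2⟩ | ⟨h1, h2 | h2⟩ <;> rw [h1, h2] <;> ring_nf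

lemma diag_eq_inf_iff {e : (ℤ×ℤ)×(ℤ×ℤ)} {c : ℤ×ℤ} : diagOf e = infDiag c ↔
    (e.1 = c ∧ e.2 = (c.1+1, c.2+1)) ∨ (e.1 = (c.1+1, c.2+1) ∧ e.2 = c) := by
  unfold diagOf infDiag; rw [Sym2.eq_iff]

lemma diag_eq_sup_iff {e : (ℤ×ℤ)×(ℤ×ℤ)} {c : ℤ×ℤ} : diagOf e = supDiag c ↔
    (e.1 = (c.1, c.2+1) ∧ e.2 = (c.1+1, c.2)) ∨ (e.1 = (c.1+1, c.2) ∧ e.2 = (c.1, c.2+1)) := by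
  unfold diagOf supDiag; rw [Sym2.eq_iff]

lemma mem_stairLanding {g p d : ℕ} {c : ℤ × ℤ} : c ∈ stairLanding g p d ↔
    (∃ i < g, c = ((i : ℤ), -(i : ℤ))) ∨ (∃ j < p, c = ((g : ℤ) + j, -(g : ℤ))) ∨
    (∃ k < d, c = ((g : ℤ) + p + k, -(g : ℤ) - 1 - k)) := by
  simp [stairLanding, Finset.mem_union, Finset.mem_image, Finset.mem_range, eq_comm, or_assoc]

lemma card_stairLanding {g p d : ℕ} : (stairLanding g p d).card = g + p + d := by
  unfold stairLanding
  rw [Finset.card_union_of_disjoint, Finset.card_union_of_disjoint]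
  · rw [Finset.card_image_of_injective, Finset.card_image_of_injective,
      Finset.card_image_of_injective, Finset.card_range, Finset.card_range, Finset.card_range]
    · intro a b h; simpa using (congrArg Prod.fst h)
    · intro a b h; simpa using (congrArg Prod.fst h)
    · intro a b h; simpa using (congrArg Prod.fst h)
  · simp only [Finset.disjoint_left, Finset.mem_image, Finset.mem_range]
    rintro a ⟨i, hi, rfl⟩ ⟨j, hj, h⟩
    have h2 := congrArg Prod.snd h; simp at h2; omega
  · simp only [Finset.disjoint_left, Finset.mem_union, Finset.mem_image, Finset.mem_range]
    rintro a ha ⟨k, hk, rfl⟩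
    rcases ha with ⟨i, hi, h⟩ | ⟨j, hj, h⟩
    · have h2 := congrArg Prod.snd h; have h1 := congrArg Prod.fst h; simp at h1 h2; omega
    · have h2 := congrArg Prod.snd h; simp at h2; omega

/-- the explicit embroidery of `E_{g,p,1}` -/
def emb (g p : ℕ) (i : ℕ) : (ℤ × ℤ) × (ℤ × ℤ) :=
  if i < 2*g then
    (if i % 2 = 0 then (((i/2 : ℕ), -(i/2 : ℕ)), ((i/2 : ℕ)+1, 1-(i/2 : ℕ)))
     else (((i/2 : ℕ), 1-(i/2 : ℕ)), ((i/2 : ℕ)+1, -(i/2 : ℕ))))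
  else if i < 2*g + p then
    (((i - g : ℕ), -(g:ℤ)), ((i - g : ℕ)+1, 1-(g:ℤ)))
  else if i = 2*g + p then (((g:ℤ)+p-1, 1-(g:ℤ)), ((g:ℤ)+p, -(g:ℤ)))
  else if i = 2*g + p + 1 then (((g:ℤ)+p+1, -(g:ℤ)), ((g:ℤ)+p, -(g:ℤ)-1))
  else if i = 2*g + p + 2 then (((g:ℤ)+p+1, -(g:ℤ)-1), ((g:ℤ)+p, -(g:ℤ)))
  else ((3*(g:ℤ)+2*p+2-i, -(g:ℤ)), (3*(g:ℤ)+2*p+1-i, 1-(g:ℤ)))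

/-- where inf diagonals occur in `emb` -/
lemma emb_inf_loc (g p : ℕ) (hg : 2 ≤ g) (hp : 2 ≤ p) (i : ℕ) (hi : i < 2*(g+p+1))
    (c : ℤ × ℤ) (h : diagOf (emb g p i) = infDiag c) :
    (i < 2*g ∧ i % 2 = 0 ∧ c = (((i/2 : ℕ) : ℤ), -((i/2 : ℕ) : ℤ))) ∨
    (2*g ≤ i ∧ i < 2*g+p ∧ c = (((i-g : ℕ) : ℤ), -(g : ℤ))) ∨
    (i = 2*g+p+1 ∧ c = ((g:ℤ)+p, -(g:ℤ)-1)) := by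
  obtain ⟨c1, c2⟩ := c
  simp only [Prod.mk.injEq]
  rw [diag_eq_inf_iff] at h
  unfold emb at h
  split_ifs at h with h1 h2 h3 h4 h5 h6
  all_goals dsimp only at h
  all_goals simp only [Prod.mk.injEq] at h
  all_goals rcases h with ⟨⟨e1, e2⟩, e3, e4⟩ | ⟨⟨e1, e2⟩, e3, e4⟩ <;> omega

/-- where sup diagonals occur in `emb` -/
lemma emb_sup_loc (g p : ℕ) (hg : 2 ≤ g) (hp : 2 ≤ p) (i : ℕ) (hi : i < 2*(g+p+1))
    (c : ℤ × ℤ) (h : diagOf (emb g p i) = supDiag c) :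
    (i < 2*g ∧ i % 2 = 1 ∧ c = (((i/2 : ℕ) : ℤ), -((i/2 : ℕ) : ℤ))) ∨
    (i = 2*g+p ∧ c = ((g:ℤ)+p-1, -(g:ℤ))) ∨
    (i = 2*g+p+2 ∧ c = ((g:ℤ)+p, -(g:ℤ)-1)) ∨
    (2*g+p+3 ≤ i ∧ i < 2*(g+p+1) ∧ c = (3*(g:ℤ)+2*p+1-i, -(g:ℤ))) := by
  obtain ⟨c1, c2⟩ := c
  simp only [Prod.mk.injEq]
  rw [diag_eq_sup_iff] at h
  unfold emb at h
  split_ifs at h with h1 h2 h3 h4 h5 h6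
  all_goals dsimp only at h
  all_goals simp only [Prod.mk.injEq] at h
  all_goals rcases h with ⟨⟨e1, e2⟩, e3, e4⟩ | ⟨⟨e1, e2⟩, e3, e4⟩ <;> omega

lemma emb_adj (g p : ℕ) (i : ℕ) (h : i + 1 < 2*(g+p+1)) :
    Adj (emb g p i).2 (emb g p (i+1)).1 := by
  rw [adj_iff]; unfold emb; split_ifs <;> dsimp only <;> omega

lemma emb_diag_stair_inf (g p : ℕ) (i0 : ℕ) (h : i0 < g) :
    diagOf (emb g p (2*i0)) = infDiag (((i0:ℕ):ℤ), -((i0:ℕ):ℤ)) := by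
  rw [diag_eq_inf_iff]
  unfold emb
  rw [if_pos (by omega : 2*i0 < 2*g), if_pos (by omega : (2*i0) % 2 = 0)]
  left
  constructor <;> try dsimp only
  all_goals try simp only [Prod.mk.injEq, true_and, and_true]
  all_goals try push_cast
  all_goals try omega

lemma emb_diag_stair_sup (g p : ℕ) (i0 : ℕ) (h : i0 < g) :
    diagOf (emb g p (2*i0+1)) = supDiag (((i0:ℕ):ℤ), -((i0:ℕ):ℤ)) := by
  rw [diag_eq_sup_iff]
  unfold emb
  rw [if_pos (by omega : 2*i0+1 < 2*g), if_neg (by omega : ¬ (2*i0+1) % 2 = 0)]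
  left
  constructor <;> try dsimp only
  all_goals try simp only [Prod.mk.injEq, true_and, and_true]
  all_goals try push_cast
  all_goals try omega

lemma emb_diag_land_inf (g p : ℕ) (hg : 2 ≤ g) (j : ℕ) (h : j < p) :
    diagOf (emb g p (2*g+j)) = infDiag ((g:ℤ)+j, -(g:ℤ)) := by
  rw [diag_eq_inf_iff]
  unfold emb
  rw [if_neg (by omega : ¬ 2*g+j < 2*g), if_pos (by omega : 2*g+j < 2*g+p)]
  left
  constructor <;> try dsimp only
  all_goals try simp only [Prod.mk.injEq, true_and, and_true]
  all_goals try push_cast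
  all_goals try omega

lemma emb_diag_land_sup_last (g p : ℕ) (hp : 1 ≤ p) :
    diagOf (emb g p (2*g+p)) = supDiag ((g:ℤ)+(p-1:ℕ), -(g:ℤ)) := by
  rw [diag_eq_sup_iff]
  unfold emb
  rw [if_neg (by omega), if_neg (by omega), if_pos rfl]
  left
  constructor <;> try dsimp only
  all_goals try simp only [Prod.mk.injEq, true_and, and_true]
  all_goals try push_cast
  all_goals try omega

lemma emb_diag_land_sup (g p : ℕ) (j : ℕ) (h : j < p - 1) :
    diagOf (emb g p (2*g+2*p+1-j)) = supDiag ((g:ℤ)+j, -(g:ℤ)) := by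
  rw [diag_eq_sup_iff]
  unfold emb
  rw [if_neg (by omega), if_neg (by omega), if_neg (by omega), if_neg (by omega),
    if_neg (by omega)]
  right
  constructor <;> try dsimp only
  all_goals try simp only [Prod.mk.injEq, true_and, and_true]
  all_goals try push_cast
  all_goals try omega

lemma emb_diag_tail_inf (g p : ℕ) :
    diagOf (emb g p (2*g+p+1)) = infDiag ((g:ℤ)+p, -(g:ℤ)-1) := by
  rw [diag_eq_inf_iff]
  unfold emb
  rw [if_neg (by omega), if_neg (by omega), if_neg (by omega), if_pos rfl]
  right
  constructor <;> try dsimp only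
  all_goals try simp only [Prod.mk.injEq, true_and, and_true]
  all_goals try push_cast
  all_goals try omega

lemma emb_diag_tail_sup (g p : ℕ) :
    diagOf (emb g p (2*g+p+2)) = supDiag ((g:ℤ)+p, -(g:ℤ)-1) := by
  rw [diag_eq_sup_iff]
  unfold emb
  rw [if_neg (by omega), if_neg (by omega), if_neg (by omega), if_neg (by omega), if_pos rfl]
  right
  constructor <;> try dsimp only
  all_goals try simp only [Prod.mk.injEq, true_and, and_true]
  all_goals try push_cast
  all_goals try omega

lemma emb_isEmbroidery (g p : ℕ) (hg : 2 ≤ g) (hp : 2 ≤ p) :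
    IsEmbroidery (stairLanding g p 1) (emb g p) := by
  have hcard : (stairLanding g p 1).card = g + p + 1 := card_stairLanding
  refine ⟨?_, ?_, ?_, ?_, ?_⟩
  · -- cond 1
    intro i hi
    rw [hcard] at hi
    by_cases h1 : i < 2*g
    · refine ⟨(((i/2 : ℕ) : ℤ), -((i/2 : ℕ) : ℤ)), ?_, ?_⟩
      · rw [mem_stairLanding]; exact Or.inl ⟨i/2, by omega, rfl⟩
      · by_cases h2 : i % 2 = 0
        · left
          have := emb_diag_stair_inf g p (i/2) (by omega)
          rwa [(by omega : 2*(i/2) = i)] at this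
        · right
          have := emb_diag_stair_sup g p (i/2) (by omega)
          rwa [(by omega : 2*(i/2)+1 = i)] at this
    · by_cases h2 : i < 2*g + p
      · refine ⟨((g:ℤ)+(i-2*g : ℕ), -(g:ℤ)), ?_, Or.inl ?_⟩
        · rw [mem_stairLanding]; exact Or.inr (Or.inl ⟨i-2*g, by omega, rfl⟩)
        · have := emb_diag_land_inf g p hg (i-2*g) (by omega)
          rwa [(by omega : 2*g+(i-2*g) = i)] at this
      · by_cases h3 : i = 2*g+p
        · refine ⟨((g:ℤ)+(p-1 : ℕ), -(g:ℤ)), ?_, Or.inr ?_⟩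
          · rw [mem_stairLanding]; exact Or.inr (Or.inl ⟨p-1, by omega, rfl⟩)
          · rw [h3]; exact emb_diag_land_sup_last g p (by omega)
        · by_cases h4 : i = 2*g+p+1
          · refine ⟨((g:ℤ)+p, -(g:ℤ)-1), ?_, Or.inl ?_⟩
            · rw [mem_stairLanding]
              refine Or.inr (Or.inr ⟨0, by omega, ?_⟩)
              simp
            · rw [h4]; exact emb_diag_tail_inf g p
          · by_cases h5 : i = 2*g+p+2
            · refine ⟨((g:ℤ)+p, -(g:ℤ)-1), ?_, Or.inr ?_⟩
              · rw [mem_stairLanding]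
                refine Or.inr (Or.inr ⟨0, by omega, ?_⟩)
                simp
              · rw [h5]; exact emb_diag_tail_sup g p
            · refine ⟨((g:ℤ)+(2*g+2*p+1-i : ℕ), -(g:ℤ)), ?_, Or.inr ?_⟩
              · rw [mem_stairLanding]
                exact Or.inr (Or.inl ⟨2*g+2*p+1-i, by omega, rfl⟩)
              · have := emb_diag_land_sup g p (2*g+2*p+1-i) (by omega)
                rwa [(by omega : 2*g+2*p+1-(2*g+2*p+1-i) = i)] at this
  · -- cond 2 : unique inf
    intro c hc
    rw [mem_stairLanding] at hc
    rw [hcard]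
    rcases hc with ⟨i0, hi0, rfl⟩ | ⟨j, hj, rfl⟩ | ⟨k, hk, rfl⟩
    · refine ⟨2*i0, ⟨by omega, emb_diag_stair_inf g p i0 hi0⟩, ?_⟩
      rintro i' ⟨hi', hd⟩
      rcases emb_inf_loc g p hg hp i' hi' _ hd with ⟨l1, l2, l3⟩ | ⟨l1, l2, l3⟩ | ⟨l1, l3⟩ <;>
        simp only [Prod.mk.injEq] at l3 <;> omega
    · refine ⟨2*g+j, ⟨by omega, emb_diag_land_inf g p hg j hj⟩, ?_⟩
      rintro i' ⟨hi', hd⟩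
      rcases emb_inf_loc g p hg hp i' hi' _ hd with ⟨l1, l2, l3⟩ | ⟨l1, l2, l3⟩ | ⟨l1, l3⟩ <;>
        simp only [Prod.mk.injEq] at l3 <;> omega
    · interval_cases k
      refine ⟨2*g+p+1, ⟨by omega, ?_⟩, ?_⟩
      · have := emb_diag_tail_inf g p
        convert this using 2 <;> push_cast <;> ring
      · rintro i' ⟨hi', hd⟩
        rcases emb_inf_loc g p hg hp i' hi' _ hd with ⟨l1, l2, l3⟩ | ⟨l1, l2, l3⟩ | ⟨l1, l3⟩ <;>
          simp only [Prod.mk.injEq] at l3 <;> omega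
  · -- cond 3 : unique sup
    intro c hc
    rw [mem_stairLanding] at hc
    rw [hcard]
    rcases hc with ⟨i0, hi0, rfl⟩ | ⟨j, hj, rfl⟩ | ⟨k, hk, rfl⟩
    · refine ⟨2*i0+1, ⟨by omega, emb_diag_stair_sup g p i0 hi0⟩, ?_⟩
      rintro i' ⟨hi', hd⟩
      rcases emb_sup_loc g p hg hp i' hi' _ hd with ⟨l1, l2, l3⟩ | ⟨l1, l3⟩ | ⟨l1, l3⟩ |
        ⟨l1, l2, l3⟩ <;> simp only [Prod.mk.injEq] at l3 <;> omega
    · by_cases hj1 : j = p - 1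
      · refine ⟨2*g+p, ⟨by omega, ?_⟩, ?_⟩
        · rw [hj1]; exact emb_diag_land_sup_last g p (by omega)
        · rintro i' ⟨hi', hd⟩
          rcases emb_sup_loc g p hg hp i' hi' _ hd with ⟨l1, l2, l3⟩ | ⟨l1, l3⟩ | ⟨l1, l3⟩ |
            ⟨l1, l2, l3⟩ <;> simp only [Prod.mk.injEq] at l3 <;> omega
      · refine ⟨2*g+2*p+1-j, ⟨by omega, emb_diag_land_sup g p j (by omega)⟩, ?_⟩
        rintro i' ⟨hi', hd⟩
        rcases emb_sup_loc g p hg hp i' hi' _ hd with ⟨l1, l2, l3⟩ | ⟨l1, l3⟩ | ⟨l1, l3⟩ |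
          ⟨l1, l2, l3⟩ <;> simp only [Prod.mk.injEq] at l3 <;> omega
    · interval_cases k
      refine ⟨2*g+p+2, ⟨by omega, ?_⟩, ?_⟩
      · have := emb_diag_tail_sup g p
        convert this using 2 <;> push_cast <;> ring
      · rintro i' ⟨hi', hd⟩
        rcases emb_sup_loc g p hg hp i' hi' _ hd with ⟨l1, l2, l3⟩ | ⟨l1, l3⟩ | ⟨l1, l3⟩ |
          ⟨l1, l2, l3⟩ <;> simp only [Prod.mk.injEq] at l3 <;> omega
  · -- cond 4 : inf before sup
    intro c hc i j hi hj hdi hdj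
    rw [hcard] at hi hj
    obtain ⟨c1, c2⟩ := c
    rcases emb_inf_loc g p hg hp i hi _ hdi with ⟨l1, l2, l3⟩ | ⟨l1, l2, l3⟩ | ⟨l1, l3⟩ <;>
      rcases emb_sup_loc g p hg hp j hj _ hdj with ⟨m1, m2, m3⟩ | ⟨m1, m3⟩ | ⟨m1, m3⟩ |
        ⟨m1, m2, m3⟩ <;>
      simp only [Prod.mk.injEq] at l3 m3 <;> omega
  · -- cond 5 : adjacency
    intro i hi
    rw [hcard] at hi
    exact emb_adj g p i hi

lemma adj_symm {u v : ℤ × ℤ} (h : Adj u v) : Adj v u := by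
  rw [adj_iff] at h ⊢; omega


lemma infDiag_inj {c c' : ℤ × ℤ} (h : infDiag c = infDiag c') : c = c' := by
  obtain ⟨c1, c2⟩ := c; obtain ⟨d1, d2⟩ := c'
  rw [infDiag, infDiag, Sym2.eq_iff] at h
  simp only [Prod.mk.injEq] at h ⊢
  omega

lemma supDiag_inj {c c' : ℤ × ℤ} (h : supDiag c = supDiag c') : c = c' := by
  obtain ⟨c1, c2⟩ := c; obtain ⟨d1, d2⟩ := c'
  rw [supDiag, supDiag, Sym2.eq_iff] at h
  simp only [Prod.mk.injEq] at h ⊢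
  omega

lemma infDiag_ne_supDiag {c c' : ℤ × ℤ} : infDiag c ≠ supDiag c' := by
  obtain ⟨c1, c2⟩ := c; obtain ⟨d1, d2⟩ := c'
  intro h
  rw [infDiag, supDiag, Sym2.eq_iff] at h
  simp only [Prod.mk.injEq] at h
  omega

section nbr
variable {g p : ℕ}

/-- no inferior-diagonal endpoint is adjacent to `(0,0)` or `(1,1)` -/
lemma nbr_head_inf (hg : 2 ≤ g) (hp : 2 ≤ p) {v y c : ℤ × ℤ}
    (hv : v = (0, 0) ∨ v = (1, 1)) (hc : c ∈ stairLanding g p 1)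
    (hy : y = c ∨ y = (c.1 + 1, c.2 + 1)) (ha : Adj v y) : False := by
  obtain ⟨c1, c2⟩ := c; obtain ⟨y1, y2⟩ := y; obtain ⟨v1, v2⟩ := v
  rw [mem_stairLanding] at hc
  rw [adj_iff] at ha
  dsimp only at ha hy
  simp only [Prod.mk.injEq] at hv hy
  rcases hc with ⟨i, hi, hceq⟩ | ⟨j, hj, hceq⟩ | ⟨k, hk, hceq⟩ <;>
    simp only [Prod.mk.injEq] at hceq <;> omega

/-- superior-diagonal endpoints adjacent to `(0,0)` or `(1,1)` -/
lemma nbr_head_sup (hg : 2 ≤ g) (hp : 2 ≤ p) {v y c : ℤ × ℤ}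
    (hv : v = (0, 0) ∨ v = (1, 1)) (hc : c ∈ stairLanding g p 1)
    (hy : y = (c.1, c.2 + 1) ∨ y = (c.1 + 1, c.2)) (ha : Adj v y) :
    (c = ((0 : ℤ), (0 : ℤ)) ∧ (y = (0, 1) ∨ y = (1, 0))) ∨
    (c = ((1 : ℤ), (-1 : ℤ)) ∧ y = (1, 0)) := by
  obtain ⟨c1, c2⟩ := c; obtain ⟨y1, y2⟩ := y; obtain ⟨v1, v2⟩ := v
  rw [mem_stairLanding] at hc
  rw [adj_iff] at ha
  dsimp only at ha hy
  simp only [Prod.mk.injEq] at hv hy ⊢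
  rcases hc with ⟨i, hi, hceq⟩ | ⟨j, hj, hceq⟩ | ⟨k, hk, hceq⟩ <;>
    simp only [Prod.mk.injEq] at hceq <;> omega

/-- inferior-diagonal endpoints adjacent to `(0,1)`: only the head cell -/
lemma nbr_a2_inf (hg : 2 ≤ g) (hp : 2 ≤ p) {y c : ℤ × ℤ}
    (hc : c ∈ stairLanding g p 1)
    (hy : y = c ∨ y = (c.1 + 1, c.2 + 1)) (ha : Adj ((0 : ℤ), (1 : ℤ)) y) :
    c = ((0 : ℤ), (0 : ℤ)) := by
  obtain ⟨c1, c2⟩ := c; obtain ⟨y1, y2⟩ := y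
  rw [mem_stairLanding] at hc
  rw [adj_iff] at ha
  dsimp only at ha hy
  simp only [Prod.mk.injEq] at hy ⊢
  rcases hc with ⟨i, hi, hceq⟩ | ⟨j, hj, hceq⟩ | ⟨k, hk, hceq⟩ <;>
    simp only [Prod.mk.injEq] at hceq <;> omega

lemma nbr_a2_sup (hg : 2 ≤ g) (hp : 2 ≤ p) {y c : ℤ × ℤ}
    (hc : c ∈ stairLanding g p 1)
    (hy : y = (c.1, c.2 + 1) ∨ y = (c.1 + 1, c.2)) (ha : Adj ((0 : ℤ), (1 : ℤ)) y) :
    False := by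
  obtain ⟨c1, c2⟩ := c; obtain ⟨y1, y2⟩ := y
  rw [mem_stairLanding] at hc
  rw [adj_iff] at ha
  dsimp only at ha hy
  simp only [Prod.mk.injEq] at hy
  rcases hc with ⟨i, hi, hceq⟩ | ⟨j, hj, hceq⟩ | ⟨k, hk, hceq⟩ <;>
    simp only [Prod.mk.injEq] at hceq <;> omega

lemma nbr_u_inf (hg : 2 ≤ g) (hp : 2 ≤ p) {y c : ℤ × ℤ}
    (hc : c ∈ stairLanding g p 1)
    (hy : y = c ∨ y = (c.1 + 1, c.2 + 1)) (ha : Adj ((1 : ℤ), (0 : ℤ)) y) :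
    c = ((0 : ℤ), (0 : ℤ)) ∨ c = ((1 : ℤ), (-1 : ℤ)) := by
  obtain ⟨c1, c2⟩ := c; obtain ⟨y1, y2⟩ := y
  rw [mem_stairLanding] at hc
  rw [adj_iff] at ha
  dsimp only at ha hy
  simp only [Prod.mk.injEq] at hy ⊢
  rcases hc with ⟨i, hi, hceq⟩ | ⟨j, hj, hceq⟩ | ⟨k, hk, hceq⟩ <;>
    simp only [Prod.mk.injEq] at hceq <;> omega

lemma nbr_u_sup (hg : 2 ≤ g) (hp : 2 ≤ p) {y c : ℤ × ℤ}
    (hc : c ∈ stairLanding g p 1)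
    (hy : y = (c.1, c.2 + 1) ∨ y = (c.1 + 1, c.2)) (ha : Adj ((1 : ℤ), (0 : ℤ)) y) :
    False := by
  obtain ⟨c1, c2⟩ := c; obtain ⟨y1, y2⟩ := y
  rw [mem_stairLanding] at hc
  rw [adj_iff] at ha
  dsimp only at ha hy
  simp only [Prod.mk.injEq] at hy
  rcases hc with ⟨i, hi, hceq⟩ | ⟨j, hj, hceq⟩ | ⟨k, hk, hceq⟩ <;>
    simp only [Prod.mk.injEq] at hceq <;> omega

lemma nbr_b_inf (hg : 2 ≤ g) (hp : 2 ≤ p) {v y c : ℤ × ℤ}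
    (hv : v = (1, -1) ∨ v = (2, 0)) (hc : c ∈ stairLanding g p 1)
    (hy : y = c ∨ y = (c.1 + 1, c.2 + 1)) (ha : Adj v y) : False := by
  obtain ⟨c1, c2⟩ := c; obtain ⟨y1, y2⟩ := y; obtain ⟨v1, v2⟩ := v
  rw [mem_stairLanding] at hc
  rw [adj_iff] at ha
  dsimp only at ha hy
  simp only [Prod.mk.injEq] at hv hy
  rcases hc with ⟨i, hi, hceq⟩ | ⟨j, hj, hceq⟩ | ⟨k, hk, hceq⟩ <;>
    simp only [Prod.mk.injEq] at hceq <;> omega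

lemma nbr_b_sup (hg : 2 ≤ g) (hp : 2 ≤ p) {v y c : ℤ × ℤ}
    (hv : v = (1, -1) ∨ v = (2, 0)) (hc : c ∈ stairLanding g p 1)
    (hy : y = (c.1, c.2 + 1) ∨ y = (c.1 + 1, c.2)) (ha : Adj v y) :
    c = ((0 : ℤ), (0 : ℤ)) ∨ c = ((1 : ℤ), (-1 : ℤ)) ∨ c = ((2 : ℤ), (-2 : ℤ)) := by
  obtain ⟨c1, c2⟩ := c; obtain ⟨y1, y2⟩ := y; obtain ⟨v1, v2⟩ := v
  rw [mem_stairLanding] at hc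
  rw [adj_iff] at ha
  dsimp only at ha hy
  simp only [Prod.mk.injEq] at hv hy ⊢
  rcases hc with ⟨i, hi, hceq⟩ | ⟨j, hj, hceq⟩ | ⟨k, hk, hceq⟩ <;>
    simp only [Prod.mk.injEq] at hceq <;> omega

end nbr

lemma not_strongly (g p : ℕ) (hg : 2 ≤ g) (hp : 2 ≤ p) :
    ¬ StronglyBrodable (stairLanding g p 1) := by
  rintro ⟨d, ⟨⟨h1, h2, h3, h4, h5⟩, hcl⟩⟩
  have hcard : (stairLanding g p 1).card = g + p + 1 := card_stairLanding
  rw [hcard] at h1 h2 h3 h4 h5 hcl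
  set N := 2 * (g + p + 1) with hNdef
  have hN10 : 10 ≤ N := by omega
  -- the three head cells
  have m0 : ((0 : ℤ), (0 : ℤ)) ∈ stairLanding g p 1 := by
    rw [mem_stairLanding]; exact Or.inl ⟨0, by omega, by norm_num⟩
  have m1 : ((1 : ℤ), (-1 : ℤ)) ∈ stairLanding g p 1 := by
    rw [mem_stairLanding]; exact Or.inl ⟨1, by omega, by norm_num⟩
  have m2 : ((2 : ℤ), (-2 : ℤ)) ∈ stairLanding g p 1 := by
    rw [mem_stairLanding]
    rcases le_or_gt 3 g with h | h
    · exact Or.inl ⟨2, by omega, by norm_num⟩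
    · refine Or.inr (Or.inl ⟨0, by omega, ?_⟩)
      have : g = 2 := by omega
      rw [this]; norm_num
  -- positions of the six diagonals
  obtain ⟨β, ⟨hβN, hβ⟩, hβu⟩ := h2 _ m0
  obtain ⟨γ0, ⟨hγ0N, hγ0⟩, hγ0u⟩ := h3 _ m0
  obtain ⟨β1, ⟨hβ1N, hβ1⟩, hβ1u⟩ := h2 _ m1
  obtain ⟨γ1, ⟨hγ1N, hγ1⟩, hγ1u⟩ := h3 _ m1
  obtain ⟨β2, ⟨hβ2N, hβ2⟩, hβ2u⟩ := h2 _ m2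
  obtain ⟨γ2, ⟨hγ2N, hγ2⟩, hγ2u⟩ := h3 _ m2
  have ord0 : β < γ0 := h4 _ m0 _ _ hβN hγ0N hβ hγ0
  have ord1 : β1 < γ1 := h4 _ m1 _ _ hβ1N hγ1N hβ1 hγ1
  have ord2 : β2 < γ2 := h4 _ m2 _ _ hβ2N hγ2N hβ2 hγ2
  -- endpoints of the inferior diagonal of the head cell
  have hβe : ((d β).1 = ((0 : ℤ), (0 : ℤ)) ∧ (d β).2 = ((1 : ℤ), (1 : ℤ))) ∨
      ((d β).1 = ((1 : ℤ), (1 : ℤ)) ∧ (d β).2 = ((0 : ℤ), (0 : ℤ))) := by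
    have h := hβ; rw [diag_eq_inf_iff] at h; dsimp only at h; norm_num at h; exact h
  have hv1 : (d β).1 = ((0 : ℤ), (0 : ℤ)) ∨ (d β).1 = ((1 : ℤ), (1 : ℤ)) := by
    rcases hβe with ⟨h', _⟩ | ⟨h', _⟩
    exacts [Or.inl h', Or.inr h']
  have hv2 : (d β).2 = ((0 : ℤ), (0 : ℤ)) ∨ (d β).2 = ((1 : ℤ), (1 : ℤ)) := by
    rcases hβe with ⟨_, h'⟩ | ⟨_, h'⟩
    exacts [Or.inr h', Or.inl h']
  ---- Step A : the diagonal preceding the head inferior diagonal is sup (1,-1)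
  have hβ1N' : β + 1 < N := by omega
  -- (used inside : the wrap case W is refuted via the successor of position 0)
  have stepW : ¬ (β = 0 ∧ γ0 = N - 1) := by
    rintro ⟨hb0, hgN⟩
    have hadj01 : Adj (d 0).2 (d 1).1 := h5 0 (by omega)
    obtain ⟨c', hc', hd'⟩ := h1 1 (by omega)
    have hv0 : (d 0).2 = ((0 : ℤ), (0 : ℤ)) ∨ (d 0).2 = ((1 : ℤ), (1 : ℤ)) := by
      rw [hb0] at hv2; exact hv2
    rcases hd' with hd' | hd'
    · have hy : (d 1).1 = c' ∨ (d 1).1 = (c'.1 + 1, c'.2 + 1) := by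
        rw [diag_eq_inf_iff] at hd'
        rcases hd' with ⟨h', _⟩ | ⟨h', _⟩
        exacts [Or.inl h', Or.inr h']
      exact nbr_head_inf hg hp hv0 hc' hy hadj01
    · have hy : (d 1).1 = (c'.1, c'.2 + 1) ∨ (d 1).1 = (c'.1 + 1, c'.2) := by
        rw [diag_eq_sup_iff] at hd'
        rcases hd' with ⟨h', _⟩ | ⟨h', _⟩
        exacts [Or.inl h', Or.inr h']
      rcases nbr_head_sup hg hp hv0 hc' hy hadj01 with ⟨hc0, _⟩ | ⟨hc1, _⟩
      · rw [hc0] at hd'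
        have : 1 = γ0 := hγ0u 1 ⟨by omega, hd'⟩
        omega
      · rw [hc1] at hd'
        have : 1 = γ1 := hγ1u 1 ⟨by omega, hd'⟩
        have hb1 : β1 = 0 := by omega
        rw [hb1] at hβ1
        rw [hb0] at hβ
        have : ((1 : ℤ), (-1 : ℤ)) = ((0 : ℤ), (0 : ℤ)) := infDiag_inj (hβ1.symm.trans hβ)
        simp at this
  -- the predecessor position of β
  have stepA : γ1 = (if β = 0 then N - 1 else β - 1) ∧
      (d (if β = 0 then N - 1 else β - 1)).2 = ((1 : ℤ), (0 : ℤ)) := by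
    set P := if β = 0 then N - 1 else β - 1 with hPdef
    have hPN : P < N := by rw [hPdef]; split_ifs <;> omega
    have hPadj : Adj (d P).2 (d β).1 := by
      rw [hPdef]; split_ifs with hb
      · rw [hb]; exact hcl
      · have h' := h5 (β - 1) (by omega)
        rwa [(by omega : β - 1 + 1 = β)] at h'
    obtain ⟨cP, hcP, hdP⟩ := h1 P hPN
    rcases hdP with hdP | hdP
    · have hy : (d P).2 = cP ∨ (d P).2 = (cP.1 + 1, cP.2 + 1) := by
        rw [diag_eq_inf_iff] at hdP
        rcases hdP with ⟨_, h'⟩ | ⟨_, h'⟩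
        exacts [Or.inr h', Or.inl h']
      exact absurd (nbr_head_inf hg hp hv1 hcP hy (adj_symm hPadj)) (by simp)
    · have hy : (d P).2 = (cP.1, cP.2 + 1) ∨ (d P).2 = (cP.1 + 1, cP.2) := by
        rw [diag_eq_sup_iff] at hdP
        rcases hdP with ⟨_, h'⟩ | ⟨_, h'⟩
        exacts [Or.inr h', Or.inl h']
      rcases nbr_head_sup hg hp hv1 hcP hy (adj_symm hPadj) with ⟨hc0, _⟩ | ⟨hc1, hye⟩
      · rw [hc0] at hdP
        have hPγ0 : P = γ0 := hγ0u P ⟨hPN, hdP⟩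
        rw [hPdef] at hPγ0
        by_cases hb : β = 0
        · rw [if_pos hb] at hPγ0
          exact absurd ⟨hb, hPγ0.symm⟩ stepW
        · rw [if_neg hb] at hPγ0
          omega
      · rw [hc1] at hdP
        exact ⟨(hγ1u P ⟨hPN, hdP⟩).symm, hye⟩
  ---- Step B : the successor of the head inferior diagonal is sup (0,0)
  have stepB : γ0 = β + 1 := by
    have hadjB : Adj (d β).2 (d (β + 1)).1 := h5 β (by omega)
    obtain ⟨cB, hcB, hdB⟩ := h1 (β + 1) (by omega)
    rcases hdB with hdB | hdB
    · have hy : (d (β + 1)).1 = cB ∨ (d (β + 1)).1 = (cB.1 + 1, cB.2 + 1) := by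
        rw [diag_eq_inf_iff] at hdB
        rcases hdB with ⟨h', _⟩ | ⟨h', _⟩
        exacts [Or.inl h', Or.inr h']
      exact absurd (nbr_head_inf hg hp hv2 hcB hy hadjB) (by simp)
    · have hy : (d (β + 1)).1 = (cB.1, cB.2 + 1) ∨ (d (β + 1)).1 = (cB.1 + 1, cB.2) := by
        rw [diag_eq_sup_iff] at hdB
        rcases hdB with ⟨h', _⟩ | ⟨h', _⟩
        exacts [Or.inl h', Or.inr h']
      rcases nbr_head_sup hg hp hv2 hcB hy hadjB with ⟨hc0, _⟩ | ⟨hc1, _⟩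
      · rw [hc0] at hdB
        exact (hγ0u (β + 1) ⟨by omega, hdB⟩).symm
      · rw [hc1] at hdB
        have := hγ1u (β + 1) ⟨by omega, hdB⟩
        have hA := stepA.1
        split_ifs at hA <;> omega
  ---- Step C : the successor of sup (0,0) is inf (1,-1)
  have hγ0e : ((d γ0).1 = ((0 : ℤ), (1 : ℤ)) ∧ (d γ0).2 = ((1 : ℤ), (0 : ℤ))) ∨
      ((d γ0).1 = ((1 : ℤ), (0 : ℤ)) ∧ (d γ0).2 = ((0 : ℤ), (1 : ℤ))) := by
    have h := hγ0; rw [diag_eq_sup_iff] at h; dsimp only at h; norm_num at h; exact h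
  have stepC : β1 = (if γ0 = N - 1 then 0 else γ0 + 1) := by
    set Q := if γ0 = N - 1 then 0 else γ0 + 1 with hQdef
    have hQN : Q < N := by rw [hQdef]; split_ifs <;> omega
    have hQadj : Adj (d γ0).2 (d Q).1 := by
      rw [hQdef]; split_ifs with hb
      · rw [hb]; exact hcl
      · exact h5 γ0 (by omega)
    obtain ⟨cC, hcC, hdC⟩ := h1 Q hQN
    have hQβ : Q ≠ β := by
      rw [hQdef]; split_ifs with hb <;> omega
    rcases hγ0e with ⟨_, ht⟩ | ⟨_, ht⟩ <;> rw [ht] at hQadj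
    · -- t = (1,0)
      rcases hdC with hdC | hdC
      · have hy : (d Q).1 = cC ∨ (d Q).1 = (cC.1 + 1, cC.2 + 1) := by
          rw [diag_eq_inf_iff] at hdC
          rcases hdC with ⟨h', _⟩ | ⟨h', _⟩
          exacts [Or.inl h', Or.inr h']
        rcases nbr_u_inf hg hp hcC hy hQadj with hc0 | hc1
        · rw [hc0] at hdC
          exact absurd (hβu Q ⟨hQN, hdC⟩) hQβ
        · rw [hc1] at hdC
          exact (hβ1u Q ⟨hQN, hdC⟩).symm
      · have hy : (d Q).1 = (cC.1, cC.2 + 1) ∨ (d Q).1 = (cC.1 + 1, cC.2) := by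
          rw [diag_eq_sup_iff] at hdC
          rcases hdC with ⟨h', _⟩ | ⟨h', _⟩
          exacts [Or.inl h', Or.inr h']
        exact absurd (nbr_u_sup hg hp hcC hy hQadj) (by simp)
    · -- t = (0,1)
      rcases hdC with hdC | hdC
      · have hy : (d Q).1 = cC ∨ (d Q).1 = (cC.1 + 1, cC.2 + 1) := by
          rw [diag_eq_inf_iff] at hdC
          rcases hdC with ⟨h', _⟩ | ⟨h', _⟩
          exacts [Or.inl h', Or.inr h']
        have hc0 := nbr_a2_inf hg hp hcC hy hQadj
        rw [hc0] at hdC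
        exact absurd (hβu Q ⟨hQN, hdC⟩) hQβ
      · have hy : (d Q).1 = (cC.1, cC.2 + 1) ∨ (d Q).1 = (cC.1 + 1, cC.2) := by
          rw [diag_eq_sup_iff] at hdC
          rcases hdC with ⟨h', _⟩ | ⟨h', _⟩
          exacts [Or.inl h', Or.inr h']
        exact absurd (nbr_a2_sup hg hp hcC hy hQadj) (by simp)
  ---- Step D : only two possible positions for β
  have stepD : (β = 0 ∧ γ0 = 1 ∧ β1 = 2 ∧ γ1 = N - 1) ∨
      (β = N - 2 ∧ γ0 = N - 1 ∧ β1 = 0 ∧ γ1 = N - 3) := by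
    have hA := stepA.1
    split_ifs at hA with hb
    · left
      refine ⟨hb, by omega, ?_, hA⟩
      rw [stepC, if_neg (by omega)]; omega
    · by_cases hbN : β = N - 2
      · right
        refine ⟨hbN, by omega, ?_, by omega⟩
        rw [stepC, if_pos (by omega)]
      · exfalso
        rw [stepC, if_neg (by omega)] at ord1
        omega
  ---- Step E : the successor of inf (1,-1) is sup (2,-2), contradiction
  have hβ1e : (d β1).2 = ((1 : ℤ), (-1 : ℤ)) ∨ (d β1).2 = ((2 : ℤ), (0 : ℤ)) := by
    have h := hβ1; rw [diag_eq_inf_iff] at h; dsimp only at h; norm_num at h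
    rcases h with ⟨_, h'⟩ | ⟨_, h'⟩
    exacts [Or.inr h', Or.inl h']
  have hβ1succN : β1 + 1 < N := by rcases stepD with ⟨_, _, hb, _⟩ | ⟨_, _, hb, _⟩ <;> omega
  have hadjE : Adj (d β1).2 (d (β1 + 1)).1 := h5 β1 hβ1succN
  obtain ⟨cE, hcE, hdE⟩ := h1 (β1 + 1) hβ1succN
  have stepE : γ2 = β1 + 1 := by
    rcases hdE with hdE | hdE
    · have hy : (d (β1 + 1)).1 = cE ∨ (d (β1 + 1)).1 = (cE.1 + 1, cE.2 + 1) := by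
        rw [diag_eq_inf_iff] at hdE
        rcases hdE with ⟨h', _⟩ | ⟨h', _⟩
        exacts [Or.inl h', Or.inr h']
      exact absurd (nbr_b_inf hg hp hβ1e hcE hy hadjE) (by simp)
    · have hy : (d (β1 + 1)).1 = (cE.1, cE.2 + 1) ∨ (d (β1 + 1)).1 = (cE.1 + 1, cE.2) := by
        rw [diag_eq_sup_iff] at hdE
        rcases hdE with ⟨h', _⟩ | ⟨h', _⟩
        exacts [Or.inl h', Or.inr h']
      rcases nbr_b_sup hg hp hβ1e hcE hy hadjE with hc0 | hc1 | hc2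
      · rw [hc0] at hdE
        have := hγ0u (β1 + 1) ⟨hβ1succN, hdE⟩
        rcases stepD with ⟨_, _, _, _⟩ | ⟨_, _, _, _⟩ <;> omega
      · rw [hc1] at hdE
        have := hγ1u (β1 + 1) ⟨hβ1succN, hdE⟩
        rcases stepD with ⟨_, _, _, _⟩ | ⟨_, _, _, _⟩ <;> omega
      · rw [hc2] at hdE
        exact (hγ2u (β1 + 1) ⟨hβ1succN, hdE⟩).symm
  ---- Step F : no room for inf (2,-2)
  rcases stepD with ⟨hb, hg0, hb1, _⟩ | ⟨hb, hg0, hb1, _⟩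
  · -- β = 0, γ0 = 1, β1 = 2, γ2 = 3, β2 < 3
    have hβ2lt : β2 < 3 := by omega
    interval_cases β2
    · rw [hb] at hβ
      have : ((2 : ℤ), (-2 : ℤ)) = ((0 : ℤ), (0 : ℤ)) := infDiag_inj (hβ2.symm.trans hβ)
      simp at this
    · rw [hg0] at hγ0
      exact infDiag_ne_supDiag (hβ2.symm.trans hγ0)
    · rw [hb1] at hβ1
      have : ((2 : ℤ), (-2 : ℤ)) = ((1 : ℤ), (-1 : ℤ)) := infDiag_inj (hβ2.symm.trans hβ1)
      simp at this
  · -- β = N-2, β1 = 0, γ2 = 1, β2 = 0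
    have hβ2eq : β2 = 0 := by omega
    rw [hβ2eq] at hβ2
    rw [hb1] at hβ1
    have : ((2 : ℤ), (-2 : ℤ)) = ((1 : ℤ), (-1 : ℤ)) := infDiag_inj (hβ2.symm.trans hβ1)
    simp at this

/-- For `g ≥ 2` and `p ≥ 2`, the staircase with landing `E_{g,p,1}` is brodable but
not strongly brodable. -/
theorem stairLanding_g_p_one (g p : ℕ) (hg : 2 ≤ g) (hp : 2 ≤ p) :
    Brodable (stairLanding g p 1) ∧ ¬ StronglyBrodable (stairLanding g p 1) := by
  exact ⟨⟨emb g p, emb_isEmbroidery g p hg hp⟩, not_strongly g p hg hp⟩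
end
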